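/- Let H be an N×N real symmetric tridiagonal matrix with N ≥ 2 all of whose off-diagonal entries H_{k,k+1}, 1 ≤ k ≤ N−1, are nonzero, so that H has pairwise distinct eigenvalues λ_1 < λ_2 < ⋯ < λ_N. For each i set M_i = λ_i I_N − H. Then for every i ∈ {1, …, N}: (i) for every k ∈ {1, …, N}: |det((M_i)_{k|k})| < ∏_{j ≠ i} |λ_i − λ_j|; and (ii) for every k ∈ {1, …, N−1}: √2 · |det((M_i)_{k|k+1})| < ∏_{j ≠ i} |λ_i − λ_j|. -/

import Mathlib

open Polynomial Matrix in
private lemma myDerivProd {ι : Type*} [DecidableEq ι] (s : Finset ι) (f : ι → ℝ[X]) :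
    derivative (∏ b ∈ s, f b) = ∑ b ∈ s, (∏ a ∈ s.erase b, f a) * derivative (f b) := by
  classical
  rw [Finset.prod_eq_multiset_prod, Polynomial.derivative_prod]
  rfl

open Polynomial Matrix in
private lemma myDerivDet {m : Type*} [Fintype m] [DecidableEq m] (P : Matrix m m ℝ[X]) :
    derivative P.det
      = ∑ k, (P.updateCol k fun r => derivative (P r k)).det := by
  classical
  rw [Matrix.det_apply, map_sum]
  have h1 : ∀ σ : Equiv.Perm m,
      derivative (Equiv.Perm.sign σ • ∏ i, P (σ i) i)
        = ∑ k, Equiv.Perm.sign σ •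
            ((∏ i ∈ Finset.univ.erase k, P (σ i) i) * derivative (P (σ k) k)) := by
    intro σ
    rw [Units.smul_def, map_zsmul, myDerivProd, Finset.smul_sum]
    simp [Units.smul_def]
  simp_rw [h1]
  rw [Finset.sum_comm]
  refine Finset.sum_congr rfl fun k _ => ?_
  rw [Matrix.det_apply]
  refine Finset.sum_congr rfl fun σ _ => ?_
  congr 1
  have h2 : ∀ i : m, (P.updateCol k fun r => derivative (P r k)) (σ i) i
      = if i = k then derivative (P (σ i) k) else P (σ i) i := by
    intro i
    by_cases hik : i = k <;> simp [Matrix.updateCol_apply, hik]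
  rw [Finset.prod_congr rfl fun i _ => h2 i]
  rw [← Finset.mul_prod_erase Finset.univ _ (Finset.mem_univ k), if_pos rfl]
  rw [Finset.prod_congr rfl (fun i hi => if_neg (Finset.ne_of_mem_erase hi))]
  ring

/-- Let `H` be an `N×N` real symmetric tridiagonal matrix (`N ≥ 2`)
with all off-diagonal entries `H_{k,k+1}` nonzero, so that `H` has pairwise distinct
eigenvalues `λ_1 < ⋯ < λ_N`.  Set `M_i = λ_i I − H`.  Then for every `i`:
(i) for every `k`, `|det((M_i)_{k|k})| < ∏_{j≠i} |λ_i − λ_j|`; and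
(ii) for every `k ≤ N−1`, `√2 · |det((M_i)_{k|k+1})| < ∏_{j≠i} |λ_i − λ_j|`. -/
theorem tridiagonal_minor_det_bounds {n : ℕ}
    (H : Matrix (Fin (n + 2)) (Fin (n + 2)) ℝ)
    (hsymm : H.IsSymm)
    (htri : ∀ i j : Fin (n + 2), (i : ℕ) + 1 < (j : ℕ) → H i j = 0)
    (hb : ∀ k : Fin (n + 1), H k.castSucc k.succ ≠ 0)
    (lam : Fin (n + 2) → ℝ) (hmono : StrictMono lam)
    (hchar : H.charpoly = ∏ j, (Polynomial.X - Polynomial.C (lam j)))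
    (M : Fin (n + 2) → Matrix (Fin (n + 2)) (Fin (n + 2)) ℝ)
    (hM : ∀ i, M i = lam i • (1 : Matrix (Fin (n + 2)) (Fin (n + 2)) ℝ) - H)
    (i : Fin (n + 2)) :
    (∀ k : Fin (n + 2),
      |((M i).submatrix k.succAbove k.succAbove).det|
        < ∏ j ∈ Finset.univ.erase i, |lam i - lam j|)
    ∧ (∀ k : Fin (n + 1),
      Real.sqrt 2 * |((M i).submatrix (k.castSucc).succAbove (k.succ).succAbove).det|
        < ∏ j ∈ Finset.univ.erase i, |lam i - lam j|) := by
  classical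
  open Polynomial Matrix in
  set f : ℝ[X] →+* ℝ[X] := eval₂RingHom Polynomial.C (X + C (lam i)) with hf
  set N : Matrix (Fin (n+2)) (Fin (n+2)) ℝ[X] := (charmatrix H).map f with hNdef
  have hdetN : N.det = ∏ j, (X + C (lam i - lam j)) := by
    rw [hNdef, ← RingHom.mapMatrix_apply, ← RingHom.map_det, ← Matrix.charpoly, hchar, map_prod]
    refine Finset.prod_congr rfl fun j _ => ?_
    simp [hf, C_sub]
    ring
  have hNM : N.map (evalRingHom 0) = M i := by
    rw [hM i]
    ext p q
    by_cases hpq : p = q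
    · subst hpq
      simp [hNdef, charmatrix_apply_eq, hf, Matrix.one_apply]
    · simp [hNdef, charmatrix_apply_ne _ _ _ hpq, hf, Matrix.one_apply_ne hpq, hpq]
  have hdet0 : (M i).det = 0 := by
    rw [← hNM, ← RingHom.mapMatrix_apply, ← RingHom.map_det, hdetN, map_prod]
    refine Finset.prod_eq_zero (Finset.mem_univ i) ?_
    simp
  have hNentry : ∀ r c, derivative (N r c) = if r = c then 1 else 0 := by
    intro r c
    by_cases hrc : r = c
    · subst hrc
      simp [hNdef, charmatrix_apply_eq, hf]
    · simp [hNdef, charmatrix_apply_ne _ _ _ hrc, hf, hrc]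
  have h2 : ∀ k, (fun r => derivative (N r k)) = Pi.single k (1 : ℝ[X]) := by
    intro k
    funext r
    rw [hNentry, Pi.single_apply]
  have h3 : ∀ k : Fin (n+2), (N.updateCol k (Pi.single k 1)).det = adjugate N k k := by
    intro k
    rw [← Matrix.det_transpose, ← Matrix.updateRow_transpose, ← Matrix.adjugate_apply,
      ← Matrix.adjugate_transpose, Matrix.transpose_apply]
  have h4 : derivative N.det = ∑ k, adjugate N k k := by
    rw [myDerivDet N]
    refine Finset.sum_congr rfl fun k _ => ?_
    rw [h2 k, h3 k]
  have htrace : ∑ k, adjugate (M i) k k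
      = ∏ j ∈ Finset.univ.erase i, (lam i - lam j) := by
    have h5 : ∑ k, adjugate (M i) k k = (derivative N.det).eval 0 := by
      rw [h4, eval_finset_sum]
      refine Finset.sum_congr rfl fun k _ => ?_
      have := congrFun (congrFun (congrArg Matrix.adjugate hNM) k) k
      rw [← this, ← RingHom.mapMatrix_apply, ← RingHom.map_adjugate,
        RingHom.mapMatrix_apply, Matrix.map_apply]
      rfl
    rw [h5, hdetN, myDerivProd]
    rw [eval_finset_sum]
    rw [Finset.sum_eq_single i]
    · rw [eval_mul]
      simp [eval_prod]
    · intro j _ hji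
      rw [eval_mul]
      have : (∏ a ∈ Finset.univ.erase j, (X + C (lam i - lam a))).eval 0 = 0 := by
        rw [eval_prod]
        refine Finset.prod_eq_zero
          (Finset.mem_erase.mpr ⟨fun h => hji h.symm, Finset.mem_univ i⟩) ?_
        simp
      rw [this, zero_mul]
    · intro h
      exact absurd (Finset.mem_univ i) h
  -- basic entry facts
  have hMentry : ∀ p q : Fin (n+2), p ≠ q → (M i) p q = -H p q := by
    intro p q hpq
    rw [hM i]
    simp [Matrix.sub_apply, Matrix.one_apply_ne hpq]
  have hMrow : ∀ v : Fin (n+2) → ℝ, (M i).mulVec v = 0 → ∀ p, ∑ q, (M i) p q * v q = 0 := by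
    intro v hv p
    have := congrFun hv p
    simpa [Matrix.mulVec, dotProduct] using this
  -- kernel is (at most) one dimensional
  have hker : ∀ v : Fin (n+2) → ℝ, (M i).mulVec v = 0 → v 0 = 0 → v = 0 := by
    intro v hv h0
    have key : ∀ m : ℕ, ∀ hm : m < n + 2, v ⟨m, hm⟩ = 0 := by
      intro m
      induction m using Nat.strong_induction_on with
      | _ m IH =>
        intro hm
        rcases Nat.eq_zero_or_pos m with rfl | hpos
        · have h00 : (⟨0, hm⟩ : Fin (n+2)) = 0 := by
            ext; simp
          rw [h00]; exact h0
        · obtain ⟨m', rfl⟩ : ∃ m', m = m' + 1 := ⟨m - 1, by omega⟩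
          have hm1 : m' < n + 1 := by omega
          have hm0 : m' < n + 2 := by omega
          have hrow := hMrow v hv ⟨m', hm0⟩
          rw [Finset.sum_eq_single (⟨m' + 1, hm⟩ : Fin (n+2))] at hrow
          · have hne : (⟨m', hm0⟩ : Fin (n+2)) ≠ ⟨m' + 1, hm⟩ := by
              simp [Fin.ext_iff]
            have hH : (M i) ⟨m', hm0⟩ ⟨m' + 1, hm⟩
                = -H (Fin.castSucc ⟨m', hm1⟩) (Fin.succ ⟨m', hm1⟩) := by
              rw [hMentry _ _ hne]; rfl
            rcases mul_eq_zero.mp hrow with h | h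
            · rw [hH] at h
              exact absurd (neg_eq_zero.mp h) (hb ⟨m', hm1⟩)
            · exact h
          · intro q _ hq
            rcases lt_trichotomy (q : ℕ) (m' + 1) with h | h | h
            · have hvq := IH (q : ℕ) (by omega) q.isLt
              have : v q = 0 := by rw [← hvq]
              rw [this, mul_zero]
            · exact absurd (Fin.ext h : q = ⟨m' + 1, hm⟩) hq
            · have hpq : (⟨m', hm0⟩ : Fin (n+2)) ≠ q := by
                simp [Fin.ext_iff]; omega
              rw [hMentry _ _ hpq, htri _ _ (by simpa using h), neg_zero, zero_mul]
          · intro h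
            exact absurd (Finset.mem_univ _) h
    funext p
    have := key (p : ℕ) p.isLt
    rwa [Fin.eta] at this
  -- any two kernel vectors are proportional
  have hprop : ∀ x y : Fin (n+2) → ℝ, (M i).mulVec x = 0 → (M i).mulVec y = 0 →
      ∀ p q, x p * y q = x q * y p := by
    intro x y hx hy p q
    have hz : ∀ r, x 0 * y r = y 0 * x r := by
      have hzker : (M i).mulVec (x 0 • y - y 0 • x) = 0 := by
        rw [Matrix.mulVec_sub, Matrix.mulVec_smul, Matrix.mulVec_smul, hx, hy]
        simp
      have hz0 : (x 0 • y - y 0 • x) 0 = 0 := by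
        simp [mul_comm]
      have hz1 := hker _ hzker hz0
      intro r
      have := congrFun hz1 r
      simp only [Pi.sub_apply, Pi.smul_apply, smul_eq_mul, Pi.zero_apply, sub_eq_zero] at this
      exact this
    by_cases hx0 : x 0 = 0
    · by_cases hy0 : y 0 = 0
      · have hx' := hker x hx hx0
        simp [hx']
      · have hxq : ∀ r, x r = 0 := by
          intro r
          have h := hz r
          rw [hx0, zero_mul] at h
          exact (mul_eq_zero.mp h.symm).resolve_left hy0
        rw [hxq p, hxq q]
        simp
    · have h1 := hz q
      have h2' := hz p
      apply mul_left_cancel₀ hx0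
      linear_combination x p * h1 - x q * h2'
  set A := (M i).adjugate with hAdef
  have hMA : M i * A = 0 := by
    rw [hAdef, Matrix.mul_adjugate, hdet0, zero_smul]
  have hcol : ∀ k, (M i).mulVec (fun p => A p k) = 0 := by
    intro k
    funext p
    have h := congrFun (congrFun hMA p) k
    simpa [Matrix.mul_apply, Matrix.mulVec, dotProduct] using h
  have hminor : ∀ p q k l, A p k * A q l = A q k * A p l :=
    fun p q k l => hprop _ _ (hcol k) (hcol l) p q
  have hMsymm : (M i)ᵀ = M i := by
    rw [hM i, Matrix.transpose_sub, Matrix.transpose_smul, Matrix.transpose_one, hsymm.eq]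
  have hAsymm : ∀ p q, A p q = A q p := by
    intro p q
    have hAt : Aᵀ = A := by
      rw [hAdef, Matrix.adjugate_transpose, hMsymm]
    conv_lhs => rw [← hAt]
    rfl
  set d : Fin (n+2) → ℝ := fun k => A k k with hd
  have hsq : ∀ p q, A p q ^ 2 = d p * d q := by
    intro p q
    have h := hminor p q p q
    calc A p q ^ 2 = A q p * A p q := by rw [hAsymm q p]; ring
      _ = A p p * A q q := h.symm
      _ = d p * d q := rfl
  have hsign : ∀ p q, 0 ≤ d p * d q := by
    intro p q
    rw [← hsq p q]
    positivity
  set t := ∏ j ∈ Finset.univ.erase i, (lam i - lam j) with ht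
  have htr : ∑ k, d k = t := htrace
  have hTt : ∏ j ∈ Finset.univ.erase i, |lam i - lam j| = |t| := by
    rw [ht, Finset.abs_prod]
  have hTpos : 0 < |t| := by
    rw [← hTt]
    apply Finset.prod_pos
    intro j hj
    have hji : j ≠ i := (Finset.mem_erase.mp hj).1
    have : lam i ≠ lam j := fun h => hji (hmono.injective h.symm)
    exact abs_pos.mpr (sub_ne_zero.mpr this)
  have htne : t ≠ 0 := by
    intro h
    rw [h, abs_zero] at hTpos
    exact lt_irrefl 0 hTpos
  have habs : ∑ k, |d k| = |t| := by
    rw [← htr]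
    by_cases hneg : ∃ j, d j < 0
    · obtain ⟨j0, hj0⟩ := hneg
      have hall : ∀ l, d l ≤ 0 := by
        intro l
        nlinarith [hsign j0 l]
      rw [abs_of_nonpos (Finset.sum_nonpos fun l _ => hall l), ← Finset.sum_neg_distrib]
      exact Finset.sum_congr rfl fun l _ => abs_of_nonpos (hall l)
    · push_neg at hneg
      rw [abs_of_nonneg (Finset.sum_nonneg fun l _ => hneg l)]
      exact Finset.sum_congr rfl fun l _ => abs_of_nonneg (hneg l)
  have hadj : ∀ k : Fin (n+2), ∃ p, p ≠ k ∧ (M i) p k ≠ 0 := by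
    intro k
    by_cases hk : (k : ℕ) < n + 1
    · refine ⟨Fin.succ ⟨(k : ℕ), hk⟩, ?_, ?_⟩
      · intro h
        have := congrArg Fin.val h
        simp at this
      · have hne : (Fin.succ ⟨(k : ℕ), hk⟩ : Fin (n+2)) ≠ k := by
          intro h
          have := congrArg Fin.val h
          simp at this
        rw [hMentry _ _ hne]
        have hkk : k = Fin.castSucc ⟨(k : ℕ), hk⟩ := by
          ext; simp
        rw [neg_ne_zero]
        intro h
        apply hb ⟨(k : ℕ), hk⟩
        rw [← hsymm.apply]
        exact h
    · have hkval : (k : ℕ) = n + 1 := by omega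
      refine ⟨Fin.castSucc ⟨n, Nat.lt_succ_self n⟩, ?_, ?_⟩
      · intro h
        have := congrArg Fin.val h
        simp [hkval] at this
      · have hne : (Fin.castSucc ⟨n, Nat.lt_succ_self n⟩ : Fin (n+2)) ≠ k := by
          intro h
          have := congrArg Fin.val h
          simp [hkval] at this
        rw [hMentry _ _ hne]
        have hkk : k = Fin.succ ⟨n, Nat.lt_succ_self n⟩ := by
          ext; simp [hkval]
        rw [neg_ne_zero, hkk]
        exact hb ⟨n, Nat.lt_succ_self n⟩
  constructor
  · -- part (i)
    intro k
    have hdetA : ((M i).submatrix k.succAbove k.succAbove).det = A k k := by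
      have h := Matrix.adjugate_fin_succ_eq_det_submatrix (M i) k k
      have hev : ((-1 : ℝ)) ^ ((k : ℕ) + (k : ℕ)) = 1 := Even.neg_one_pow ⟨(k : ℕ), rfl⟩
      rw [hAdef, h, hev, one_mul]
    have hex : ∃ p, p ≠ k ∧ d p ≠ 0 := by
      by_contra hcon
      push_neg at hcon
      obtain ⟨p0, hp0k, hp0⟩ := hadj k
      have hAqk : ∀ q, q ≠ k → A q k = 0 := by
        intro q hq
        have h := hsq q k
        rw [hcon q hq, zero_mul] at h
        exact (pow_eq_zero_iff (by norm_num : 2 ≠ 0)).mp h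
      have hrow := congrFun (hcol k) p0
      have hsum : ∑ q, (M i) p0 q * A q k = 0 := by
        simpa [Matrix.mulVec, dotProduct] using hrow
      rw [Finset.sum_eq_single k (fun q _ hq => by rw [hAqk q hq, mul_zero])
        (fun h => absurd (Finset.mem_univ k) h)] at hsum
      have hdk : d k = 0 := (mul_eq_zero.mp hsum).resolve_left hp0
      apply htne
      rw [← htr]
      apply Finset.sum_eq_zero
      intro l _
      by_cases hl : l = k
      · rw [hl]; exact hdk
      · exact hcon l hl
    obtain ⟨p, hpk, hp⟩ := hex
    have hpair : |d k| + |d p| ≤ ∑ j, |d j| := by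
      have h1 : (({k, p} : Finset (Fin (n+2))).sum fun j => |d j|) = |d k| + |d p| :=
        Finset.sum_pair (Ne.symm hpk)
      rw [← h1]
      exact Finset.sum_le_sum_of_subset_of_nonneg (Finset.subset_univ _)
        (fun j _ _ => abs_nonneg _)
    have hppos := abs_pos.mpr hp
    rw [hdetA, hTt]
    have : |A k k| = |d k| := rfl
    rw [this]
    linarith [habs.ge, habs.le]
  · -- part (ii)
    intro k
    have hdetA2 : |((M i).submatrix (k.castSucc).succAbove (k.succ).succAbove).det|
        = |A k.succ k.castSucc| := by
      have h := Matrix.adjugate_fin_succ_eq_det_submatrix (M i) k.succ k.castSucc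
      rw [hAdef, h, abs_mul, abs_pow, abs_neg, abs_one, one_pow, one_mul]
    set a := A k.succ k.castSucc with ha
    have h2' : a ^ 2 = d k.succ * d k.castSucc := hsq _ _
    have hnepair : (k.succ : Fin (n+2)) ≠ k.castSucc := by
      intro h
      have := congrArg Fin.val h
      simp at this
    have hpair : |d k.succ| + |d k.castSucc| ≤ |t| := by
      rw [← habs]
      have h1 : (({k.succ, k.castSucc} : Finset (Fin (n+2))).sum fun j => |d j|)
          = |d k.succ| + |d k.castSucc| := Finset.sum_pair hnepair
      rw [← h1]
      exact Finset.sum_le_sum_of_subset_of_nonneg (Finset.subset_univ _)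
        (fun j _ _ => abs_nonneg _)
    have hprodabs : d k.succ * d k.castSucc = |d k.succ| * |d k.castSucc| := by
      rw [← abs_mul]
      exact (abs_of_nonneg (hsign _ _)).symm
    have key : (Real.sqrt 2 * |a|) ^ 2 < |t| ^ 2 := by
      rw [mul_pow, Real.sq_sqrt (by norm_num : (0:ℝ) ≤ 2), sq_abs]
      nlinarith [sq_nonneg (|d k.succ| - |d k.castSucc|), abs_nonneg (d k.succ),
        abs_nonneg (d k.castSucc), hTpos, h2', hprodabs, hpair]
    have hfin := lt_of_pow_lt_pow_left₀ 2 (abs_nonneg t) key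
    rw [hdetA2, hTt]
    exact hfin
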